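/- arXiv:2211.14427 — 4 statements merged into one kernel-verified Lean document; each statement's English description precedes it below -/
import Mathlib

section
/- For 0 < σ_ρ ≤ √2, the equation (σ_ρ²/2)·y = arctanh(y) has the unique solution y = 0 on (-1,1); for σ_ρ > √2 it has exactly three solutions y₋ < 0 < y₊ on (-1,1), with y₊ = -y₋. -/
open Real Set

/-- arctanh on (-1,1), given by (1/2)·log((1+y)/(1-y)). -/
noncomputable def arctanh (y : ℝ) : ℝ := (1/2) * Real.log ((1 + y) / (1 - y))

lemma arctanh_zero : arctanh 0 = 0 := by
  simp [arctanh]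

lemma arctanh_neg' (y : ℝ) (h1 : -1 < y) (h2 : y < 1) : arctanh (-y) = -arctanh y := by
  unfold arctanh
  have hy1 : (0:ℝ) < 1 + y := by linarith
  have hy2 : (0:ℝ) < 1 - y := by linarith
  have : (1 + -y) / (1 - -y) = ((1 + y) / (1 - y))⁻¹ := by
    rw [inv_div]
    ring_nf
  rw [this, Real.log_inv]
  ring

lemma hasDerivAt_arctanh (y : ℝ) (h1 : -1 < y) (h2 : y < 1) :
    HasDerivAt arctanh (1/(1-y^2)) y := by
  have hy1 : (0:ℝ) < 1 + y := by linarith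
  have hy2 : (0:ℝ) < 1 - y := by linarith
  have h3 : HasDerivAt (fun x : ℝ => 1 + x) 1 y := by
    simpa using (hasDerivAt_id y).const_add (1:ℝ)
  have h4 : HasDerivAt (fun x : ℝ => 1 - x) (-1) y := by
    simpa using (hasDerivAt_id y).const_sub (1:ℝ)
  have l3 := h3.log hy1.ne'
  have l4 := h4.log hy2.ne'
  have hd : HasDerivAt (fun x => (1/2) * (Real.log (1+x) - Real.log (1-x)))
      ((1/2) * (1/(1+y) - (-1)/(1-y))) y := by
    simpa using (l3.sub l4).const_mul (1/2 : ℝ)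
  have heq : arctanh =ᶠ[nhds y] (fun x => (1/2) * (Real.log (1+x) - Real.log (1-x))) := by
    filter_upwards [Ioo_mem_nhds h1 h2] with x hx
    unfold arctanh
    rw [Real.log_div (by linarith [hx.1]) (by linarith [hx.2])]
  have := hd.congr_of_eventuallyEq heq
  refine this.congr_deriv ?_
  have h12 : 1 - y^2 = (1+y)*(1-y) := by ring
  rw [h12]
  field_simp
  ring

noncomputable def hfun (c y : ℝ) : ℝ := arctanh y - c * y

lemma hasDerivAt_hfun (c y : ℝ) (h1 : -1 < y) (h2 : y < 1) :
    HasDerivAt (hfun c) (1/(1-y^2) - c) y := by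
  have := (hasDerivAt_arctanh y h1 h2).sub (((hasDerivAt_id y).const_mul c))
  exact this.congr_deriv (by ring)

lemma contOn_hfun (c : ℝ) (s : Set ℝ) (hs : s ⊆ Ioo (-1:ℝ) 1) :
    ContinuousOn (hfun c) s := fun x hx =>
  ((hasDerivAt_hfun c x (hs hx).1 (hs hx).2).continuousAt).continuousWithinAt

lemma deriv_hfun (c y : ℝ) (h1 : -1 < y) (h2 : y < 1) :
    deriv (hfun c) y = 1/(1-y^2) - c :=
  (hasDerivAt_hfun c y h1 h2).deriv

/-- arctanh y > y for y in (0,1). -/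
lemma lt_arctanh (y : ℝ) (h1 : 0 < y) (h2 : y < 1) : y < arctanh y := by
  have hsub : Icc (0:ℝ) y ⊆ Ioo (-1:ℝ) 1 := fun x hx =>
    ⟨by linarith [hx.1], by linarith [hx.2]⟩
  have hmono : StrictMonoOn (hfun 1) (Icc 0 y) := by
    apply strictMonoOn_of_deriv_pos (convex_Icc 0 y) (contOn_hfun 1 _ hsub)
    intro x hx
    rw [interior_Icc] at hx
    have hx1 : (0:ℝ) < x := hx.1
    have hx2 : x < 1 := by linarith [hx.2]
    rw [deriv_hfun 1 x (by linarith) hx2]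
    have : x^2 < 1 := by nlinarith
    have h0 : 0 < 1 - x^2 := by linarith
    rw [lt_sub_iff_add_lt, zero_add, lt_div_iff₀ h0]
    nlinarith
  have := hmono (left_mem_Icc.mpr h1.le) (right_mem_Icc.mpr h1.le) h1
  simp only [hfun, arctanh_zero] at this
  linarith

set_option maxHeartbeats 1000000 in
theorem tanh_equation_solutions (σ : ℝ) (hσ : 0 < σ) :
    (σ ≤ Real.sqrt 2 →
      {y : ℝ | y ∈ Set.Ioo (-1:ℝ) 1 ∧ (σ^2/2) * y = arctanh y} = {0}) ∧
    (Real.sqrt 2 < σ →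
      ∃ ym yp : ℝ, ym < 0 ∧ 0 < yp ∧ yp = -ym ∧
        {y : ℝ | y ∈ Set.Ioo (-1:ℝ) 1 ∧ (σ^2/2) * y = arctanh y} = {ym, 0, yp}) := by
  have hsqrt2 : Real.sqrt 2 * Real.sqrt 2 = 2 := Real.mul_self_sqrt (by norm_num)
  set c : ℝ := σ^2/2 with hc
  constructor
  · -- c ≤ 1 case
    intro hle
    have hc1 : c ≤ 1 := by
      have : σ * σ ≤ Real.sqrt 2 * Real.sqrt 2 := by
        apply mul_le_mul hle hle hσ.le (Real.sqrt_nonneg 2)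
      rw [hsqrt2] at this
      rw [hc]; nlinarith
    ext y
    simp only [mem_setOf_eq, mem_singleton_iff, mem_Ioo]
    constructor
    · rintro ⟨⟨hy1, hy2⟩, heq⟩
      by_contra hne
      rcases lt_or_gt_of_ne hne with hneg | hpos
      · -- y < 0 : use -y
        have h1 : 0 < -y := by linarith
        have h2 : -y < 1 := by linarith
        have := lt_arctanh (-y) h1 h2
        rw [arctanh_neg' y hy1 hy2, ← heq] at this
        nlinarith
      · have := lt_arctanh y hpos hy2
        rw [← heq] at this
        nlinarith
    · rintro rfl
      exact ⟨⟨by norm_num, by norm_num⟩, by simp [arctanh_zero]⟩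
  · -- c > 1 case
    intro hlt
    have hc1 : 1 < c := by
      have : Real.sqrt 2 * Real.sqrt 2 < σ * σ := by
        apply mul_lt_mul' hlt.le hlt (Real.sqrt_nonneg 2) hσ
      rw [hsqrt2] at this
      rw [hc]; nlinarith
    have hc0 : 0 < c := by linarith
    -- b = sqrt(1 - 1/c)
    set b : ℝ := Real.sqrt (1 - 1/c) with hb
    have h1c : 0 < 1/c := by positivity
    have h1c1 : 1/c < 1 := by rw [div_lt_one hc0]; linarith
    have hbsq : b^2 = 1 - 1/c := Real.sq_sqrt (by linarith)
    have hb0 : 0 < b := Real.sqrt_pos.mpr (by linarith)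
    have hb1 : b < 1 := by nlinarith [hbsq, hb0]
    -- h strictly decreasing on [0,b]
    have hsubA : Icc (0:ℝ) b ⊆ Ioo (-1:ℝ) 1 := fun x hx =>
      ⟨by linarith [hx.1], by linarith [hx.2]⟩
    have hanti : StrictAntiOn (hfun c) (Icc 0 b) := by
      apply strictAntiOn_of_deriv_neg (convex_Icc 0 b) (contOn_hfun c _ hsubA)
      intro x hx
      rw [interior_Icc] at hx
      have hx1 : (0:ℝ) < x := hx.1
      have hx2 : x < 1 := by linarith [hx.2]
      rw [deriv_hfun c x (by linarith) hx2]
      have hxsq : x^2 < 1 - 1/c := by nlinarith [hx.2]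
      have h0 : 0 < 1 - x^2 := by nlinarith
      have : 1/c < 1 - x^2 := by linarith
      rw [sub_neg, div_lt_iff₀ h0]
      rw [div_lt_iff₀ hc0] at this
      nlinarith
    -- h strictly increasing on [b,1)
    have hsubB : Ico b (1:ℝ) ⊆ Ioo (-1:ℝ) 1 := fun x hx =>
      ⟨by linarith [hx.1], hx.2⟩
    have hmono : StrictMonoOn (hfun c) (Ico b 1) := by
      apply strictMonoOn_of_deriv_pos (convex_Ico b 1) (contOn_hfun c _ hsubB)
      intro x hx
      rw [interior_Ico] at hx
      have hx1 : b < x := hx.1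
      have hx2 : x < 1 := hx.2
      rw [deriv_hfun c x (by linarith) hx2]
      have hxsq : 1 - 1/c < x^2 := by nlinarith
      have h0 : 0 < 1 - x^2 := by nlinarith
      have : 1 - x^2 < 1/c := by linarith
      rw [sub_pos, lt_div_iff₀ h0]
      rw [lt_div_iff₀ hc0] at this
      nlinarith
    -- h(y) < 0 on (0, b]
    have hneg : ∀ y, 0 < y → y ≤ b → hfun c y < 0 := by
      intro y hy1 hy2
      have := hanti (left_mem_Icc.mpr (by linarith)) ⟨hy1.le, hy2⟩ hy1
      simpa [hfun, arctanh_zero] using this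
    -- explicit point t = (E-1)/(E+1), E = exp(2c), with hfun c t > 0
    set E : ℝ := Real.exp (2*c) with hE
    have hE1 : 1 < E := by
      rw [hE]; calc (1:ℝ) = Real.exp 0 := (Real.exp_zero).symm
        _ < Real.exp (2*c) := Real.exp_lt_exp.mpr (by linarith)
    set t : ℝ := (E-1)/(E+1) with ht
    have hEp : (0:ℝ) < E + 1 := by linarith
    have ht0 : 0 < t := div_pos (by linarith) hEp
    have ht1 : t < 1 := by rw [ht, div_lt_one hEp]; linarith
    have harct : arctanh t = c := by
      unfold arctanh
      have : (1 + t) / (1 - t) = E := by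
        rw [ht]; field_simp; ring
      rw [this, hE, Real.log_exp]; ring
    have hpos_t : 0 < hfun c t := by
      simp only [hfun, harct]
      nlinarith
    -- t > b
    have htb : b < t := by
      by_contra hle
      push_neg at hle
      have := hneg t ht0 hle
      linarith
    -- h(b) < 0
    have hhb : hfun c b < 0 := hneg b hb0 le_rfl
    -- IVT: get yp ∈ (b, t) with h yp = 0
    have hsubC : Icc b t ⊆ Ioo (-1:ℝ) 1 := fun x hx =>
      ⟨by linarith [hx.1], by linarith [hx.2]⟩
    have hivt := intermediate_value_Ioo htb.le (contOn_hfun c _ hsubC)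
    have h0mem : (0:ℝ) ∈ Ioo (hfun c b) (hfun c t) := ⟨hhb, hpos_t⟩
    obtain ⟨yp, hypmem, hypz⟩ := hivt h0mem
    have hyp_b : b < yp := hypmem.1
    have hyp_1 : yp < 1 := by linarith [hypmem.2]
    have hyp0 : 0 < yp := by linarith
    refine ⟨-yp, yp, by linarith, hyp0, by ring, ?_⟩
    have hsolve : ∀ y : ℝ, y ∈ Ioo (-1:ℝ) 1 → (c * y = arctanh y ↔ hfun c y = 0) := by
      intro y _
      unfold hfun
      constructor <;> intro h <;> linarith
    ext y
    simp only [mem_setOf_eq, mem_insert_iff, mem_singleton_iff, mem_Ioo]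
    constructor
    · rintro ⟨⟨hy1, hy2⟩, heq⟩
      have hzero : hfun c y = 0 := by unfold hfun; linarith
      rcases lt_trichotomy y 0 with hy | hy | hy
      · -- y < 0 : -y is a positive solution
        left
        have hzneg : hfun c (-y) = 0 := by
          unfold hfun at hzero ⊢
          rw [arctanh_neg' y hy1 hy2]
          linarith
        have hmy0 : 0 < -y := by linarith
        have hmy1 : -y < 1 := by linarith
        have hmyb : b < -y := by
          by_contra hle
          push_neg at hle
          have := hneg (-y) hmy0 hle
          linarith
        have : -y = yp := by
          apply hmono.injOn ⟨hmyb.le, hmy1⟩ ⟨hyp_b.le, hyp_1⟩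
          rw [hzneg, hypz]
        linarith
      · right; left; exact hy
      · right; right
        have hyb : b < y := by
          by_contra hle
          push_neg at hle
          have := hneg y hy hle
          linarith
        apply hmono.injOn ⟨hyb.le, hy2⟩ ⟨hyp_b.le, hyp_1⟩
        rw [hzero, hypz]
    · intro hy
      rcases hy with rfl | rfl | rfl
      · have hmem : (-yp) ∈ Ioo (-1:ℝ) 1 := ⟨by linarith, by linarith⟩
        refine ⟨hmem, ?_⟩
        rw [arctanh_neg' yp (by linarith) hyp_1]
        unfold hfun at hypz
        linarith
      · exact ⟨⟨by norm_num, by norm_num⟩, by simp [arctanh_zero]⟩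
      · refine ⟨⟨by linarith, hyp_1⟩, ?_⟩
        unfold hfun at hypz
        linarith
end

section
/- The unit-log-normal density f_W(w) = φ(A(w))/(w(1-w)σ_ρ), where φ is the standard normal density and A(w) = (1/σ_ρ)·log(w/(1-w)), is unimodal with mode at w = 1/2 when σ_ρ ≤ √2; when σ_ρ > √2 it is bimodal with a local minimum at w = 1/2 and two modes symmetric about 1/2. -/
open Real Set


noncomputable def uh (σ t : ℝ) : ℝ := Real.sinh (t/2) / Real.cosh (t/2) - t/σ^2
noncomputable def uh' (σ t : ℝ) : ℝ := 1/(2*Real.cosh (t/2)^2) - 1/σ^2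
noncomputable def ug (σ t : ℝ) : ℝ := (1 + Real.cosh t) * Real.exp (-t^2/(2*σ^2))
noncomputable def ugd (σ t : ℝ) : ℝ :=
  Real.exp (-t^2/(2*σ^2)) * (2 * Real.cosh (t/2)^2 * uh σ t)

lemma hasDerivAt_uh (σ : ℝ) (t : ℝ) : HasDerivAt (uh σ) (uh' σ t) t := by
  have hc : Real.cosh (t/2) ≠ 0 := (Real.cosh_pos (t/2)).ne'
  have h1 : HasDerivAt (fun t : ℝ => Real.sinh (t/2)) (Real.cosh (t/2) * (1/2)) t := by
    simpa [Function.comp_def] using (Real.hasDerivAt_sinh (t/2)).comp t ((hasDerivAt_id t).div_const 2)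
  have h2 : HasDerivAt (fun t : ℝ => Real.cosh (t/2)) (Real.sinh (t/2) * (1/2)) t := by
    simpa [Function.comp_def] using (Real.hasDerivAt_cosh (t/2)).comp t ((hasDerivAt_id t).div_const 2)
  have h3 := (h1.div h2 hc).sub ((hasDerivAt_id t).div_const (σ^2))
  refine h3.congr_deriv ?_
  have hsq := Real.cosh_sq_sub_sinh_sq (t/2)
  unfold uh'
  field_simp
  nlinarith [Real.cosh_pos (t/2)]

lemma uh'_strictAnti (σ : ℝ) : StrictAntiOn (uh' σ) (Ici 0) := by
  intro a ha b hb hab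
  have h1 : Real.cosh (a/2) < Real.cosh (b/2) := by
    rw [Real.cosh_lt_cosh,
        abs_of_nonneg (by linarith [mem_Ici.mp ha] : (0:ℝ) ≤ a/2),
        abs_of_nonneg (by linarith [mem_Ici.mp ha] : (0:ℝ) ≤ b/2)]
    linarith
  have h2 : Real.cosh (a/2)^2 < Real.cosh (b/2)^2 :=
    pow_lt_pow_left₀ h1 (Real.cosh_pos (a/2)).le two_ne_zero
  have h3 : 1/(2*Real.cosh (b/2)^2) < 1/(2*Real.cosh (a/2)^2) := by
    apply one_div_lt_one_div_of_lt
    · positivity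
    · linarith
  unfold uh'
  linarith

lemma uh_cont (σ : ℝ) : Continuous (uh σ) := by
  apply Continuous.sub
  · exact (Real.continuous_sinh.comp (continuous_id.div_const 2)).div
      (Real.continuous_cosh.comp (continuous_id.div_const 2))
      (fun t => (Real.cosh_pos (t/2)).ne')
  · exact continuous_id.div_const _

lemma uh'_cont (σ : ℝ) : Continuous (uh' σ) := by
  apply Continuous.sub
  · apply Continuous.div continuous_const
    · exact (continuous_const.mul ((Real.continuous_cosh.comp (continuous_id.div_const 2)).pow 2))
    · intro t; positivity
  · exact continuous_const


lemma uh_zero (σ : ℝ) : uh σ 0 = 0 := by simp [uh]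

lemma uh_deriv (σ t : ℝ) : deriv (uh σ) t = uh' σ t := (hasDerivAt_uh σ t).deriv

-- unimodal case: h < 0 on (0,∞)
lemma uh_neg (σ : ℝ) (hσ : 0 < σ) (h2 : σ^2 ≤ 2) : ∀ t > 0, uh σ t < 0 := by
  have hanti : StrictAntiOn (uh σ) (Ici 0) := by
    apply strictAntiOn_of_deriv_neg (convex_Ici 0) (uh_cont σ).continuousOn
    intro t ht
    rw [interior_Ici] at ht
    rw [uh_deriv]
    have hc : 1 < Real.cosh (t/2) := by
      rw [Real.one_lt_cosh]
      have := mem_Ioi.mp ht; positivity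
    have hc2 : 1 < Real.cosh (t/2)^2 := by nlinarith
    have h3 : 1/(2*Real.cosh (t/2)^2) < 1/2 := by
      exact one_div_lt_one_div_of_lt (by norm_num) (by linarith)
    have h4 : (1:ℝ)/2 ≤ 1/σ^2 := by
      rw [div_le_div_iff₀ (by norm_num) (by positivity)]
      linarith
    unfold uh'
    linarith
  intro t ht
  have := hanti (mem_Ici.mpr le_rfl) (mem_Ici.mpr ht.le) ht
  rwa [uh_zero] at this


lemma uh_lt_one_sub (σ : ℝ) (hσ : 0 < σ) (t : ℝ) : uh σ t < 1 - t/σ^2 := by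
  unfold uh
  have hc := Real.cosh_pos (t/2)
  have hs : Real.sinh (t/2) < Real.cosh (t/2) := by
    nlinarith [Real.cosh_sub_sinh (t/2), Real.exp_pos (-(t/2))]
  have : Real.sinh (t/2) / Real.cosh (t/2) < 1 := (div_lt_one hc).mpr hs
  linarith

lemma exists_tstar (σ : ℝ) (hσ : 0 < σ) (h2 : 2 < σ^2) :
    ∃ T > 0, uh σ T = 0 ∧ (∀ t ∈ Ioo 0 T, 0 < uh σ t) ∧ (∀ t > T, uh σ t < 0) := by
  have hσ1 : 1 < σ := by nlinarith
  have hd0 : 0 < uh' σ 0 := by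
    unfold uh'
    norm_num
    rw [inv_lt_iff_one_lt_mul₀ (by positivity)]
    nlinarith
  have hdT : uh' σ (2*σ) < 0 := by
    unfold uh'
    have hcσ : σ < Real.cosh σ := by
      nlinarith [Real.cosh_sub_sinh σ, Real.exp_pos (-σ),
        (Real.self_lt_sinh_iff.mpr hσ : σ < Real.sinh σ)]
    have h1 : σ^2 < Real.cosh (2*σ/2)^2 := by
      rw [show (2*σ/2) = σ by ring]
      nlinarith
    rw [sub_neg, div_lt_div_iff₀ (by positivity) (by positivity)]
    nlinarith
  -- b : zero of uh'
  obtain ⟨b, hbmem, hb0⟩ : ∃ b ∈ Icc 0 (2*σ), uh' σ b = 0 := by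
    have := intermediate_value_Icc' (by positivity : (0:ℝ) ≤ 2*σ) (uh'_cont σ).continuousOn
    have h0 : (0:ℝ) ∈ Icc (uh' σ (2*σ)) (uh' σ 0) := ⟨hdT.le, hd0.le⟩
    obtain ⟨b, hb, hb0⟩ := this h0
    exact ⟨b, hb, hb0⟩
  obtain ⟨hb0le, hble⟩ := hbmem
  have hbpos : 0 < b := by
    rcases hb0le.lt_or_eq with h | h
    · exact h
    · exfalso; rw [← h] at hb0; linarith
  have hderivpos : ∀ t ∈ Ioo 0 b, 0 < uh' σ t := by
    intro t ht
    have := uh'_strictAnti σ (mem_Ici.mpr ht.1.le) (mem_Ici.mpr (ht.1.le.trans ht.2.le)) ht.2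
    rw [hb0] at this; linarith [this]
  have hderivneg : ∀ t > b, uh' σ t < 0 := by
    intro t ht
    have := uh'_strictAnti σ (mem_Ici.mpr hb0le) (mem_Ici.mpr (hb0le.trans ht.le)) ht
    rw [hb0] at this; linarith
  have hmono : StrictMonoOn (uh σ) (Icc 0 b) := by
    apply strictMonoOn_of_deriv_pos (convex_Icc 0 b) (uh_cont σ).continuousOn
    intro t ht
    rw [interior_Icc] at ht
    rw [uh_deriv]; exact hderivpos t ht
  have hanti : StrictAntiOn (uh σ) (Ici b) := by
    apply strictAntiOn_of_deriv_neg (convex_Ici b) (uh_cont σ).continuousOn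
    intro t ht
    rw [interior_Ici] at ht
    rw [uh_deriv]; exact hderivneg t ht
  have hhb : 0 < uh σ b := by
    have := hmono (left_mem_Icc.mpr hb0le) (right_mem_Icc.mpr hb0le) hbpos
    rwa [uh_zero] at this
  set T1 := b + σ^2 + 1 with hT1def
  have hT1b : b < T1 := by nlinarith
  have hhT1 : uh σ T1 < 0 := by
    have := uh_lt_one_sub σ hσ T1
    have h3 : 1 < T1/σ^2 := by
      rw [lt_div_iff₀ (by positivity)]; nlinarith
    linarith
  obtain ⟨T, hTmem, hT0⟩ : ∃ T ∈ Icc b T1, uh σ T = 0 := by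
    have := intermediate_value_Icc' hT1b.le (uh_cont σ).continuousOn
    exact this ⟨hhT1.le, hhb.le⟩
  have hTb : b < T := by
    rcases hTmem.1.lt_or_eq with h | h
    · exact h
    · exfalso; rw [← h] at hT0; linarith
  refine ⟨T, by linarith, hT0, ?_, ?_⟩
  · intro t ht
    rcases le_or_gt t b with h | h
    · have := hmono (left_mem_Icc.mpr hb0le) ⟨ht.1.le, h⟩ ht.1
      rwa [uh_zero] at this
    · have := hanti (mem_Ici.mpr h.le) (mem_Ici.mpr hTmem.1) ht.2
      rwa [hT0] at this
  · intro t ht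
    have := hanti (mem_Ici.mpr hTmem.1) (mem_Ici.mpr (hTmem.1.trans ht.le)) ht
    rwa [hT0] at this


lemma ug_even (σ t : ℝ) : ug σ (-t) = ug σ t := by
  simp [ug, Real.cosh_neg, neg_sq]

lemma ug_cont (σ : ℝ) : Continuous (ug σ) := by
  apply Continuous.mul
  · exact continuous_const.add Real.continuous_cosh
  · exact Real.continuous_exp.comp (by fun_prop)

lemma hasDerivAt_ug (σ : ℝ) (hσ : 0 < σ) (t : ℝ) : HasDerivAt (ug σ) (ugd σ t) t := by
  have hE : HasDerivAt (fun t : ℝ => Real.exp (-t^2/(2*σ^2)))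
      (Real.exp (-t^2/(2*σ^2)) * (-(2*t)/(2*σ^2))) t := by
    have hin : HasDerivAt (fun t : ℝ => -t^2/(2*σ^2)) (-(2*t)/(2*σ^2)) t := by
      have := ((hasDerivAt_pow 2 t).neg).div_const (2*σ^2)
      simpa using this
    exact (Real.hasDerivAt_exp _).comp t hin
  have h1 : HasDerivAt (fun t : ℝ => 1 + Real.cosh t) (Real.sinh t) t := by
    exact ((hasDerivAt_const t (1:ℝ)).add (Real.hasDerivAt_cosh t)).congr_deriv (zero_add _)
  have h3 := h1.mul hE
  refine h3.congr_deriv ?_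
  unfold ugd uh
  have hc := Real.cosh_pos (t/2)
  have hs2 : Real.sinh t = 2 * Real.sinh (t/2) * Real.cosh (t/2) := by
    have := Real.sinh_two_mul (t/2); rwa [show 2*(t/2) = t by ring] at this
  have hc2 : Real.cosh t = 2 * Real.cosh (t/2)^2 - 1 := by
    have h4 := Real.cosh_two_mul (t/2)
    have h5 := Real.cosh_sq_sub_sinh_sq (t/2)
    rw [show 2*(t/2) = t by ring] at h4
    linarith
  rw [hs2, hc2]
  have hσ2 : σ^2 ≠ 0 := by positivity
  field_simp
  ring
lemma ug_deriv (σ : ℝ) (hσ : 0 < σ) (t : ℝ) : deriv (ug σ) t = ugd σ t :=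
  (hasDerivAt_ug σ hσ t).deriv


lemma ugd_neg (σ : ℝ) {t : ℝ} (h : uh σ t < 0) : ugd σ t < 0 := by
  unfold ugd
  apply mul_neg_of_pos_of_neg (Real.exp_pos _)
  exact mul_neg_of_pos_of_neg (by positivity) h

lemma ugd_pos (σ : ℝ) {t : ℝ} (h : 0 < uh σ t) : 0 < ugd σ t := by
  unfold ugd
  apply mul_pos (Real.exp_pos _)
  exact mul_pos (by positivity) h

lemma ug_strictAntiOn (σ : ℝ) (hσ : 0 < σ) (T : ℝ)
    (hneg : ∀ t > T, uh σ t < 0) : StrictAntiOn (ug σ) (Ici T) := by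
  apply strictAntiOn_of_deriv_neg (convex_Ici T) (ug_cont σ).continuousOn
  intro t ht
  rw [interior_Ici] at ht
  rw [ug_deriv σ hσ]
  exact ugd_neg σ (hneg t ht)

lemma ug_strictMonoOn (σ : ℝ) (hσ : 0 < σ) (T : ℝ)
    (hpos : ∀ t ∈ Ioo 0 T, 0 < uh σ t) : StrictMonoOn (ug σ) (Icc 0 T) := by
  apply strictMonoOn_of_deriv_pos (convex_Icc 0 T) (ug_cont σ).continuousOn
  intro t ht
  rw [interior_Icc] at ht
  rw [ug_deriv σ hσ]
  exact ugd_pos σ (hpos t ht)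


noncomputable def uL (w : ℝ) : ℝ := Real.log (w/(1-w))

lemma uL_strictMonoOn : StrictMonoOn uL (Ioo 0 1) := by
  intro a ha b hb hab
  unfold uL
  apply Real.log_lt_log (div_pos ha.1 (by linarith [ha.2]))
  rw [div_lt_div_iff₀ (by linarith [ha.2]) (by linarith [hb.2])]
  nlinarith [ha.1, hb.2]

lemma uL_neg {w : ℝ} (h0 : 0 < w) (h : w < 1/2) : uL w < 0 := by
  apply Real.log_neg (div_pos h0 (by linarith))
  rw [div_lt_one (by linarith)]; linarith

lemma uL_pos {w : ℝ} (h : 1/2 < w) (h1 : w < 1) : 0 < uL w := by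
  apply Real.log_pos
  rw [lt_div_iff₀ (by linarith)]; linarith

lemma uL_half : uL (1/2) = 0 := by norm_num [uL]

lemma uL_contAt {w : ℝ} (h0 : 0 < w) (h1 : w < 1) : ContinuousAt uL w := by
  unfold uL
  have hne : (1:ℝ) - w ≠ 0 := by intro h; linarith
  exact (continuousAt_id.div (continuousAt_const.sub continuousAt_id)
    hne).log (div_pos h0 (show (0:ℝ) < 1 - w by linarith)).ne'

lemma uL_neg_symm {w : ℝ} (h0 : 0 < w) (h1 : w < 1) : uL (1-w) = -uL w := by
  unfold uL
  rw [show (1:ℝ)-(1-w) = w by ring, show (1-w)/w = (w/(1-w))⁻¹ by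
    rw [inv_div], Real.log_inv]

theorem unit_log_normal_modality (σ : ℝ) (hσ : 0 < σ)
    (φ : ℝ → ℝ) (hφ : ∀ x, φ x = Real.exp (-x^2/2) / Real.sqrt (2*π))
    (A : ℝ → ℝ) (hA : ∀ w, A w = (1/σ) * Real.log (w / (1 - w)))
    (fW : ℝ → ℝ) (hfW : ∀ w, fW w = φ (A w) / (w * (1 - w) * σ)) :
    (σ ≤ Real.sqrt 2 →
      StrictMonoOn fW (Set.Ioo 0 (1/2)) ∧ StrictAntiOn fW (Set.Ioo (1/2) 1)) ∧
    (Real.sqrt 2 < σ →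
      ∃ wm wp : ℝ, 0 < wm ∧ wm < 1/2 ∧ 1/2 < wp ∧ wp < 1 ∧ wm + wp = 1 ∧
        IsLocalMax fW wm ∧ IsLocalMax fW wp ∧ IsLocalMin fW (1/2)) := by
  have hsq2 : Real.sqrt 2 ^ 2 = 2 := Real.sq_sqrt (by norm_num)
  have hπ : 0 < Real.sqrt (2*π) := Real.sqrt_pos.mpr (by positivity)
  set k : ℝ := 2/(σ*Real.sqrt (2*π)) with hk
  have hkpos : 0 < k := by positivity
  -- transfer lemma
  have key : ∀ w ∈ Ioo (0:ℝ) 1, fW w = k * ug σ (uL w) := by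
    intro w hw
    obtain ⟨hw0, hw1⟩ := hw
    have hw1' : 0 < 1 - w := by linarith
    have hr : 0 < w/(1-w) := by positivity
    have het : Real.exp (uL w) = w/(1-w) := Real.exp_log hr
    have hent : Real.exp (-uL w) = (1-w)/w := by
      rw [Real.exp_neg, het, inv_div]
    have hcosh : Real.cosh (uL w) = (w/(1-w) + (1-w)/w)/2 := by
      rw [Real.cosh_eq, het, hent]
    rw [hfW, hφ, hA]
    unfold ug
    rw [hcosh]
    have hexp : -(1/σ * Real.log (w/(1-w)))^2/2 = -(uL w)^2/(2*σ^2) := by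
      unfold uL
      field_simp
    rw [hexp]
    have hne : Real.exp (-(uL w)^2/(2*σ^2)) ≠ 0 := (Real.exp_pos _).ne'
    have h2π : Real.sqrt (2*π) = Real.sqrt 2 * Real.sqrt π := Real.sqrt_mul (by norm_num) π
    rw [h2π, show k = 2/(σ*(Real.sqrt 2 * Real.sqrt π)) by rw [hk, h2π]]
    have hs2 : (0:ℝ) < Real.sqrt 2 := by positivity
    have hsπ : (0:ℝ) < Real.sqrt π := Real.sqrt_pos.mpr Real.pi_pos
    field_simp
    ring
  constructor
  · -- unimodal case
    intro hle
    have h2 : σ^2 ≤ 2 := by nlinarith [Real.sqrt_nonneg 2]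
    have hneg := uh_neg σ hσ h2
    have hanti : StrictAntiOn (ug σ) (Ici 0) := ug_strictAntiOn σ hσ 0 hneg
    constructor
    · intro w1 hw1 w2 hw2 hlt
      have hm1 : w1 ∈ Ioo (0:ℝ) 1 := ⟨hw1.1, by linarith [hw1.2]⟩
      have hm2 : w2 ∈ Ioo (0:ℝ) 1 := ⟨hw2.1, by linarith [hw2.2]⟩
      have ht1 : uL w1 < 0 := uL_neg hw1.1 hw1.2
      have ht2 : uL w2 < 0 := uL_neg hw2.1 hw2.2
      have htlt : uL w1 < uL w2 := uL_strictMonoOn hm1 hm2 hlt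
      have : ug σ (uL w1) < ug σ (uL w2) := by
        rw [← ug_even σ (uL w1), ← ug_even σ (uL w2)]
        exact hanti (mem_Ici.mpr (by linarith)) (mem_Ici.mpr (by linarith)) (by linarith)
      rw [key w1 hm1, key w2 hm2]
      exact mul_lt_mul_of_pos_left this hkpos
    · intro w1 hw1 w2 hw2 hlt
      have hm1 : w1 ∈ Ioo (0:ℝ) 1 := ⟨by linarith [hw1.1], hw1.2⟩
      have hm2 : w2 ∈ Ioo (0:ℝ) 1 := ⟨by linarith [hw2.1], hw2.2⟩
      have ht1 : 0 < uL w1 := uL_pos hw1.1 hw1.2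
      have htlt : uL w1 < uL w2 := uL_strictMonoOn hm1 hm2 hlt
      have : ug σ (uL w2) < ug σ (uL w1) :=
        hanti (mem_Ici.mpr ht1.le) (mem_Ici.mpr (by linarith)) htlt
      rw [key w1 hm1, key w2 hm2]
      exact mul_lt_mul_of_pos_left this hkpos
  · -- bimodal case
    intro hgt
    have h2 : 2 < σ^2 := by nlinarith [Real.sqrt_nonneg 2]
    obtain ⟨T, hT, hT0, hpos, hneg⟩ := exists_tstar σ hσ h2
    have hmono := ug_strictMonoOn σ hσ T hpos
    have hanti := ug_strictAntiOn σ hσ T hneg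
    set wp : ℝ := Real.exp T/(1+Real.exp T) with hwp
    have heT : 1 < Real.exp T := Real.one_lt_exp_iff.mpr hT
    have hden : (0:ℝ) < 1 + Real.exp T := by linarith
    have hwp1 : wp < 1 := by rw [hwp, div_lt_one hden]; linarith
    have hwphalf : 1/2 < wp := by
      rw [hwp, lt_div_iff₀ hden]; linarith
    have hwp0 : 0 < wp := by linarith
    have hwpmem : wp ∈ Ioo (0:ℝ) 1 := ⟨hwp0, hwp1⟩
    have hLwp : uL wp = T := by
      have hr : wp/(1-wp) = Real.exp T := by
        rw [hwp]
        rw [show 1 - Real.exp T/(1+Real.exp T) = 1/(1+Real.exp T) by field_simp; ring]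
        field_simp
      unfold uL
      rw [hr, Real.log_exp]
    have gmax : ∀ᶠ t in nhds T, ug σ t ≤ ug σ T := by
      filter_upwards [isOpen_Ioi.mem_nhds (show T ∈ Ioi (0:ℝ) from hT)] with t ht
      rcases le_or_gt t T with h | h
      · exact hmono.monotoneOn ⟨(mem_Ioi.mp ht).le, h⟩ ⟨hT.le, le_rfl⟩ h
      · exact (hanti (mem_Ici.mpr le_rfl) (mem_Ici.mpr h.le) h).le
    have gmin : ∀ᶠ t in nhds (0:ℝ), ug σ 0 ≤ ug σ t := by
      filter_upwards [isOpen_Ioo.mem_nhds (show (0:ℝ) ∈ Ioo (-T) T from ⟨by linarith, hT⟩)]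
        with t ht
      rcases le_or_gt 0 t with h | h
      · exact hmono.monotoneOn ⟨le_rfl, hT.le⟩ ⟨h, ht.2.le⟩ h
      · rw [← ug_even σ t]
        exact hmono.monotoneOn ⟨le_rfl, hT.le⟩ ⟨by linarith, by linarith [ht.1]⟩ (by linarith)
    have hmaxp : IsLocalMax fW wp := by
      have htend : Filter.Tendsto uL (nhds wp) (nhds T) := by
        rw [← hLwp]; exact uL_contAt hwp0 hwp1
      have ev1 := htend.eventually gmax
      have ev2 : ∀ᶠ w in nhds wp, w ∈ Ioo (0:ℝ) 1 :=
        Filter.eventually_of_mem (isOpen_Ioo.mem_nhds hwpmem) (fun _ h => h)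
      filter_upwards [ev1, ev2] with w h1 h2
      rw [key w h2, key wp hwpmem, hLwp]
      exact mul_le_mul_of_nonneg_left h1 hkpos.le
    have hsymm : ∀ w ∈ Ioo (0:ℝ) 1, fW (1-w) = fW w := by
      intro w hw
      have hw' : 1 - w ∈ Ioo (0:ℝ) 1 := ⟨by linarith [hw.2], by linarith [hw.1]⟩
      rw [key _ hw', key _ hw, uL_neg_symm hw.1 hw.2, ug_even]
    have hwmmem : (1-wp) ∈ Ioo (0:ℝ) 1 := ⟨by linarith, by linarith⟩
    have hmaxm : IsLocalMax fW (1-wp) := by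
      have htend : Filter.Tendsto (fun w : ℝ => 1 - w) (nhds (1-wp)) (nhds wp) := by
        have hc : Continuous (fun w : ℝ => 1 - w) := continuous_const.sub continuous_id
        have := hc.tendsto (1-wp)
        simpa using this
      have ev1 := htend.eventually hmaxp
      have ev2 : ∀ᶠ w in nhds (1-wp), w ∈ Ioo (0:ℝ) 1 :=
        Filter.eventually_of_mem (isOpen_Ioo.mem_nhds hwmmem) (fun _ h => h)
      filter_upwards [ev1, ev2] with w h1 h2
      rw [← hsymm w h2, hsymm wp hwpmem]
      exact h1
    have hminhalf : IsLocalMin fW (1/2) := by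
      have hhm : (1/2:ℝ) ∈ Ioo (0:ℝ) 1 := by norm_num
      have htend : Filter.Tendsto uL (nhds (1/2)) (nhds 0) := by
        rw [← uL_half]; exact uL_contAt (by norm_num) (by norm_num)
      have ev1 := htend.eventually gmin
      have ev2 : ∀ᶠ w in nhds (1/2:ℝ), w ∈ Ioo (0:ℝ) 1 :=
        Filter.eventually_of_mem (isOpen_Ioo.mem_nhds hhm) (fun _ h => h)
      filter_upwards [ev1, ev2] with w h1 h2
      rw [key w h2, key _ hhm, uL_half]
      exact mul_le_mul_of_nonneg_left h1 hkpos.le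
    exact ⟨1-wp, wp, by linarith, by linarith, hwphalf, hwp1, by ring, hmaxm, hmaxp, hminhalf⟩
end

section
/- For the unit-log-Student-t density f_W(w) = f_ν(A(w))/(w(1-w)σ_ρ), where f_ν is the Student-t density with ν > 0 degrees of freedom, lim_{w→0⁺} f_W(w) = ∞ and lim_{w→1⁻} f_W(w) = ∞. -/
open Real Set Filter Topology

lemma aux1 (σ ν p : ℝ) (hσ : 0 < σ) (hν : 0 < ν) (hp : 0 ≤ p) :
    Tendsto (fun s : ℝ => Real.exp (σ * s) / (1 + s^2/ν) ^ p) atTop atTop := by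
  have hpos : (0:ℝ) < ((1+ν⁻¹) ^ p)⁻¹ := by
    have : (0:ℝ) < (1+ν⁻¹) ^ p := rpow_pos_of_pos (by positivity) p
    positivity
  have h := (tendsto_exp_mul_div_rpow_atTop (2*p) σ hσ).const_mul_atTop hpos
  refine tendsto_atTop_mono' _ ?_ h
  filter_upwards [eventually_ge_atTop (1:ℝ)] with s hs
  have hs0 : (0:ℝ) < s := lt_of_lt_of_le one_pos hs
  have hsq : ((s^2:ℝ)) ^ p = s ^ (2*p) := by
    rw [← rpow_natCast s 2, ← rpow_mul hs0.le]; norm_num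
  have hb : (1 + s^2/ν) ^ p ≤ (1+ν⁻¹) ^ p * s ^ (2*p) := by
    have hone : (1:ℝ) ≤ s^2 := one_le_pow₀ hs
    have h1 : (1 + s^2/ν) ≤ (1+ν⁻¹) * s^2 := by
      have : s^2/ν = ν⁻¹ * s^2 := by ring
      nlinarith
    calc (1 + s^2/ν) ^ p ≤ ((1+ν⁻¹) * s^2) ^ p :=
          rpow_le_rpow (by positivity) h1 hp
      _ = (1+ν⁻¹) ^ p * s ^ (2*p) := by
          rw [mul_rpow (by positivity) (by positivity), hsq]
  have heq : ((1+ν⁻¹) ^ p)⁻¹ * (Real.exp (σ * s) / s ^ (2*p))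
      = Real.exp (σ * s) / ((1+ν⁻¹) ^ p * s ^ (2*p)) := by
    rw [inv_mul_eq_div, div_div, mul_comm ((s:ℝ) ^ (2*p))]
  rw [heq]
  exact div_le_div_of_nonneg_left (exp_pos _).le (rpow_pos_of_pos (by positivity) p) hb

theorem unit_log_student_t_boundary_limits (σ ν : ℝ) (hσ : 0 < σ) (hν : 0 < ν)
    (C : ℝ) (hC : C = Real.Gamma ((ν+1)/2) / (Real.sqrt (ν*π) * Real.Gamma (ν/2)))
    (fν : ℝ → ℝ) (hfν : ∀ x, fν x = C * (1 + x^2/ν) ^ (-(ν+1)/2 : ℝ))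
    (A : ℝ → ℝ) (hA : ∀ w, A w = (1/σ) * Real.log (w / (1 - w)))
    (fW : ℝ → ℝ) (hfW : ∀ w, fW w = fν (A w) / (w * (1 - w) * σ)) :
    Tendsto fW (𝓝[>] 0) atTop ∧ Tendsto fW (𝓝[<] 1) atTop := by
  set p : ℝ := (ν+1)/2 with hp
  have hp0 : 0 < p := by positivity
  have hC0 : 0 < C := by
    rw [hC]
    have h1 : 0 < Real.Gamma ((ν+1)/2) := Real.Gamma_pos_of_pos (by positivity)
    have h2 : 0 < Real.Gamma (ν/2) := Real.Gamma_pos_of_pos (by positivity)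
    have h3 : 0 < Real.sqrt (ν*π) := Real.sqrt_pos.mpr (by positivity)
    positivity
  -- the function G such that fW = G ∘ A on (0,1)
  set G : ℝ → ℝ := fun t => C * (1 + t^2/ν) ^ (-p : ℝ) * ((1 + Real.exp (σ*t))^2 / (Real.exp (σ*t) * σ)) with hG
  -- G tends to atTop at atBot
  have hGtop : Tendsto G atBot atTop := by
    have hlow : Tendsto (fun t : ℝ => (C/σ) * (Real.exp (σ * (-t)) / (1 + (-t)^2/ν) ^ p)) atBot atTop := by
      have := (aux1 σ ν p hσ hν hp0.le).const_mul_atTop (show (0:ℝ) < C/σ by positivity)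
      exact this.comp tendsto_neg_atBot_atTop
    refine tendsto_atTop_mono (fun t => ?_) hlow
    have hbase : (0:ℝ) < 1 + t^2/ν := by positivity
    have hE : (0:ℝ) < Real.exp (σ*t) := exp_pos _
    have hX : (0:ℝ) < (1 + t^2/ν) ^ p := rpow_pos_of_pos hbase p
    have h1 : (C/σ) * (Real.exp (σ * (-t)) / (1 + (-t)^2/ν) ^ p)
        = C * (1 + t^2/ν) ^ (-p : ℝ) * (1 / (Real.exp (σ*t) * σ)) := by
      rw [rpow_neg hbase.le, mul_neg, Real.exp_neg, neg_sq]
      field_simp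
    rw [h1, hG]
    have h2 : (1:ℝ) ≤ (1 + Real.exp (σ*t))^2 := by nlinarith
    have hXi : (0:ℝ) ≤ C * (1 + t^2/ν) ^ (-p : ℝ) := by positivity
    calc C * (1 + t^2/ν) ^ (-p : ℝ) * (1 / (Real.exp (σ*t) * σ))
        ≤ C * (1 + t^2/ν) ^ (-p : ℝ) * ((1 + Real.exp (σ*t))^2 / (Real.exp (σ*t) * σ)) := by
          gcongr

      _ = _ := rfl
  -- A tends to atBot
  have hAbot : Tendsto A (𝓝[>] (0:ℝ)) atBot := by
    have hquot : Tendsto (fun w : ℝ => w/(1-w)) (𝓝[>] (0:ℝ)) (𝓝[>] (0:ℝ)) := by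
      rw [tendsto_nhdsWithin_iff]
      constructor
      · have hc : ContinuousAt (fun w : ℝ => w/(1-w)) 0 :=
          continuousAt_id.div (continuousAt_const.sub continuousAt_id) (by norm_num)
        have := hc.tendsto
        norm_num at this
        exact this.mono_left nhdsWithin_le_nhds
      · filter_upwards [Ioo_mem_nhdsGT_of_mem (by norm_num : (0:ℝ) ∈ Ico 0 1)] with w hw
        exact mem_Ioi.mpr (div_pos hw.1 (by linarith [hw.2]))
    have hlog : Tendsto (fun w : ℝ => Real.log (w/(1-w))) (𝓝[>] (0:ℝ)) atBot :=
      Real.tendsto_log_nhdsGT_zero.comp hquot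
    have := (tendsto_const_mul_atBot_of_pos (show (0:ℝ) < 1/σ by positivity)).mpr hlog
    refine this.congr fun w => ?_
    rw [hA]
  -- fW = G ∘ A on (0,1)
  have hkey : ∀ w ∈ Ioo (0:ℝ) 1, fW w = G (A w) := by
    intro w hw
    have hw0 : (0:ℝ) < w := hw.1
    have hw1 : w < 1 := hw.2
    have hw1' : (0:ℝ) < 1 - w := by linarith
    have hEA : Real.exp (σ * A w) = w / (1 - w) := by
      rw [hA]
      rw [show σ * ((1/σ) * Real.log (w/(1-w))) = Real.log (w/(1-w)) by field_simp]
      exact Real.exp_log (by positivity)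
    rw [hfW, hfν, show (-(ν+1)/2 : ℝ) = -p by rw [hp]; ring, hG]
    simp only [hEA]
    have : (1 + w/(1-w))^2 / (w/(1-w) * σ) = 1 / (w * (1-w) * σ) := by
      field_simp
      ring
    rw [this]
    field_simp
  have h0 : Tendsto fW (𝓝[>] (0:ℝ)) atTop := by
    refine (hGtop.comp hAbot).congr' ?_
    filter_upwards [Ioo_mem_nhdsGT_of_mem (by norm_num : (0:ℝ) ∈ Ico 0 1)] with w hw
    exact (hkey w hw).symm
  -- symmetry
  have hsym : ∀ w, fW (1 - w) = fW w := by
    intro w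
    have hL : Real.log ((1-w) / (1 - (1-w))) = - Real.log (w / (1-w)) := by
      rw [show (1-w) / (1 - (1-w)) = (w / (1-w))⁻¹ by rw [inv_div]; ring_nf, Real.log_inv]
    rw [hfW, hfW, hfν, hfν, hA, hA, hL]
    rw [show (1/σ * -Real.log (w/(1-w)))^2 = (1/σ * Real.log (w/(1-w)))^2 by ring]
    rw [show (1-w) * (1 - (1-w)) * σ = w * (1-w) * σ by ring]
  have h1 : Tendsto fW (𝓝[<] (1:ℝ)) atTop := by
    have hmap : Tendsto (fun w : ℝ => 1 - w) (𝓝[<] (1:ℝ)) (𝓝[>] (0:ℝ)) := by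
      rw [tendsto_nhdsWithin_iff]
      constructor
      · have hcont : Continuous (fun w : ℝ => 1 - w) := by continuity
        have h' := hcont.tendsto 1
        norm_num at h'
        exact h'.mono_left nhdsWithin_le_nhds
      · filter_upwards [self_mem_nhdsWithin] with w hw
        simp only [mem_Iio] at hw
        exact sub_pos.mpr hw
    have := h0.comp hmap
    refine this.congr fun w => ?_
    exact hsym w
  exact ⟨h0, h1⟩
end

section
/- If Z ~ Laplace(0, 1/√2) and W = 1/(1 + exp(-σ_ρ·Z)), then for a positive integer n with n·σ_ρ < √2, E[W^{-n}] = Σ_{k=0}^{n} C(n,k)·(1 - k²σ_ρ²/2)^{-1}. -/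
open Real MeasureTheory Set
open scoped NNReal ENNReal

lemma int_exp_Ioi_val {b : ℝ} (hb : 0 < b) : ∫ x in Ioi (0:ℝ), Real.exp (-(b*x)) = b⁻¹ := by
  have := integral_comp_mul_left_Ioi (fun x => Real.exp (-x)) 0 hb
  simpa [mul_zero, integral_exp_neg_Ioi, integral_exp_Iic_zero, smul_eq_mul] using this

lemma int_exp_Iic_val {b : ℝ} (hb : 0 < b) : ∫ x in Iic (0:ℝ), Real.exp (b*x) = b⁻¹ := by
  have := integral_comp_neg_Iic 0 (fun x => Real.exp (-(b*x)))
  simp only [mul_neg, neg_neg, neg_zero] at this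
  rw [this, int_exp_Ioi_val hb]

lemma int_exp_Iic_integrable {b : ℝ} (hb : 0 < b) :
    IntegrableOn (fun x => Real.exp (b*x)) (Iic (0:ℝ)) := by
  rw [IntegrableOn, ← Measure.map_neg_eq_self (volume : Measure ℝ)]
  have m : MeasurableEmbedding fun x : ℝ => -x := (Homeomorph.neg ℝ).measurableEmbedding
  show Integrable _ ((Measure.map (fun x : ℝ => -x) volume).restrict (Iic 0))
  rw [m.restrict_map, m.integrable_map_iff]
  simp only [Function.comp_def, mul_neg, neg_preimage, neg_Iic, neg_zero, ← neg_mul]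
  exact Iff.mpr integrableOn_Ici_iff_integrableOn_Ioi (exp_neg_integrableOn_Ioi 0 hb)

lemma laplace_mgf (t : ℝ) (ht : |t| < Real.sqrt 2) :
    Integrable (fun x => ((1/Real.sqrt 2) * Real.exp (-Real.sqrt 2 * |x|)) * Real.exp (t*x)) volume ∧
    ∫ x, ((1/Real.sqrt 2) * Real.exp (-Real.sqrt 2 * |x|)) * Real.exp (t*x) = (1 - t^2/2)⁻¹ := by
  set s : ℝ := Real.sqrt 2 with hs_def
  have hs : 0 < s := Real.sqrt_pos.mpr (by norm_num)
  have hs2 : s^2 = 2 := Real.sq_sqrt (by norm_num)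
  obtain ⟨ht1, ht2⟩ := abs_lt.mp ht
  have hst1 : 0 < s - t := by linarith
  have hst2 : 0 < s + t := by linarith
  set f : ℝ → ℝ := fun x => ((1/s) * Real.exp (-s * |x|)) * Real.exp (t*x) with hf_def
  have hIoi : IntegrableOn f (Ioi 0) := by
    refine IntegrableOn.congr_fun ((exp_neg_integrableOn_Ioi 0 hst1).const_mul (1/s)) ?_ measurableSet_Ioi
    intro x hx
    simp only [mem_Ioi] at hx
    simp only [hf_def, abs_of_pos hx, mul_assoc, ← Real.exp_add]
    ring_nf
  have hIic : IntegrableOn f (Iic 0) := by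
    refine IntegrableOn.congr_fun ((int_exp_Iic_integrable hst2).const_mul (1/s)) ?_ measurableSet_Iic
    intro x hx
    simp only [mem_Iic] at hx
    simp only [hf_def, abs_of_nonpos hx, mul_assoc, ← Real.exp_add]
    ring_nf
  have hint : Integrable f := by
    rw [← integrableOn_univ, ← Iic_union_Ioi (a := (0:ℝ))]
    exact hIic.union hIoi
  refine ⟨hint, ?_⟩
  have hIicval : ∫ x in Iic (0:ℝ), f x = (1/s) * (s+t)⁻¹ := by
    rw [setIntegral_congr_fun measurableSet_Iic
      (g := fun x => (1/s) * Real.exp ((s+t)*x)) ?_, integral_const_mul, int_exp_Iic_val hst2]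
    intro x hx
    simp only [mem_Iic] at hx
    simp only [hf_def, abs_of_nonpos hx, mul_assoc, ← Real.exp_add]
    ring_nf
  have hIoival : ∫ x in Ioi (0:ℝ), f x = (1/s) * (s-t)⁻¹ := by
    rw [setIntegral_congr_fun measurableSet_Ioi
      (g := fun x => (1/s) * Real.exp (-((s-t)*x))) ?_, integral_const_mul, int_exp_Ioi_val hst1]
    intro x hx
    simp only [mem_Ioi] at hx
    simp only [hf_def, abs_of_pos hx, mul_assoc, ← Real.exp_add]
    ring_nf
  have hsplit : ∫ x, f x = (∫ x in Iic (0:ℝ), f x) + ∫ x in Ioi (0:ℝ), f x := by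
    rw [← setIntegral_union (Iic_disjoint_Ioi le_rfl) measurableSet_Ioi hIic hIoi,
      Iic_union_Ioi, setIntegral_univ]
  rw [hsplit, hIicval, hIoival]
  have h1 : s ≠ 0 := ne_of_gt hs
  have h2 : s + t ≠ 0 := ne_of_gt hst2
  have h3 : s - t ≠ 0 := ne_of_gt hst1
  have h4 : 1 - t^2/2 ≠ 0 := by nlinarith
  have h5 : (2:ℝ) - t^2 ≠ 0 := by nlinarith
  field_simp
  linear_combination (-2*s) * hs2

lemma bridge {Ω : Type*} [MeasurableSpace Ω] (μ : Measure Ω)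
    (Z : Ω → ℝ) (hZ : Measurable Z)
    (hdens : Measure.map Z μ = volume.withDensity
      (fun x => ENNReal.ofReal ((1 / Real.sqrt 2) * Real.exp (-Real.sqrt 2 * |x|))))
    (t : ℝ) (ht : |t| < Real.sqrt 2) :
    Integrable (fun ω => Real.exp (t * Z ω)) μ ∧
    ∫ ω, Real.exp (t * Z ω) ∂μ = (1 - t^2/2)⁻¹ := by
  set d : ℝ → ℝ := fun x => (1/Real.sqrt 2) * Real.exp (-Real.sqrt 2 * |x|) with hd_def
  have hd_nonneg : ∀ x, 0 ≤ d x := by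
    intro x
    have : (0:ℝ) < Real.sqrt 2 := Real.sqrt_pos.mpr (by norm_num)
    positivity
  have hd_meas : Measurable d := by fun_prop
  have hnn : Measurable fun x => Real.toNNReal (d x) := hd_meas.real_toNNReal
  have hmap : Measure.map Z μ
      = volume.withDensity (fun x => ((Real.toNNReal (d x) : ℝ≥0) : ℝ≥0∞)) := by
    rw [hdens]
    simp only [ENNReal.ofReal]
    rfl
  have hg_cont : Continuous fun x : ℝ => Real.exp (t * x) := by fun_prop
  have hsmul : Integrable (fun x => Real.toNNReal (d x) • Real.exp (t * x)) volume := by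
    refine ((laplace_mgf t ht).1).congr (Filter.Eventually.of_forall fun x => ?_)
    simp [hd_def, NNReal.smul_def, Real.coe_toNNReal _ (hd_nonneg x), neg_mul, Real.exp_nonneg]
  have h1 : Integrable (fun x => Real.exp (t * x)) (Measure.map Z μ) := by
    rw [hmap]
    exact (integrable_withDensity_iff_integrable_smul hnn).mpr hsmul
  have haesm : AEStronglyMeasurable (fun x => Real.exp (t * x)) (Measure.map Z μ) :=
    hg_cont.aestronglyMeasurable
  constructor
  · exact (integrable_map_measure haesm hZ.aemeasurable).mp h1
  · calc ∫ ω, Real.exp (t * Z ω) ∂μ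
        = ∫ x, Real.exp (t * x) ∂(Measure.map Z μ) :=
          (integral_map hZ.aemeasurable haesm).symm
      _ = ∫ x, Real.toNNReal (d x) • Real.exp (t * x) := by
          rw [hmap, integral_withDensity_eq_integral_smul hnn]
      _ = ∫ x, d x * Real.exp (t * x) := by
          refine integral_congr_ae (Filter.Eventually.of_forall fun x => ?_)
          simp [hd_def, NNReal.smul_def, Real.coe_toNNReal _ (hd_nonneg x), neg_mul, Real.exp_nonneg]
      _ = (1 - t^2/2)⁻¹ := (laplace_mgf t ht).2

theorem unit_log_laplace_negative_moments
    {Ω : Type*} [MeasurableSpace Ω] (μ : Measure Ω) [IsProbabilityMeasure μ]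
    (σ : ℝ) (hσ : 0 < σ)
    (Z : Ω → ℝ) (hZ : Measurable Z)
    (hdens : Measure.map Z μ = volume.withDensity
      (fun x => ENNReal.ofReal ((1 / Real.sqrt 2) * Real.exp (-Real.sqrt 2 * |x|))))
    (W : Ω → ℝ) (hW : ∀ ω, W ω = 1 / (1 + Real.exp (-σ * Z ω)))
    (n : ℕ) (hn : 0 < n) (hnσ : (n : ℝ) * σ < Real.sqrt 2) :
    ∫ ω, (W ω)⁻¹ ^ n ∂μ =
      ∑ k ∈ Finset.range (n+1), (n.choose k : ℝ) * (1 - (k:ℝ)^2 * σ^2 / 2)⁻¹ := by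
  have hkt : ∀ k ∈ Finset.range (n+1), |-((k:ℝ)*σ)| < Real.sqrt 2 := by
    intro k hk
    rw [Finset.mem_range] at hk
    have hk' : (k:ℝ) ≤ n := by exact_mod_cast Nat.lt_succ_iff.mp hk
    rw [abs_neg, abs_of_nonneg (by positivity)]
    calc (k:ℝ) * σ ≤ (n:ℝ) * σ := by nlinarith
      _ < Real.sqrt 2 := hnσ
  have hWpow : ∀ ω, (W ω)⁻¹ ^ n
      = ∑ k ∈ Finset.range (n+1), (n.choose k : ℝ) * Real.exp (-((k:ℝ)*σ) * Z ω) := by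
    intro ω
    rw [hW, one_div, inv_inv, add_comm, add_pow]
    refine Finset.sum_congr rfl fun k hk => ?_
    rw [one_pow, mul_one, ← Real.exp_nat_mul]
    rw [mul_comm]
    congr 1
    ring
  simp_rw [hWpow]
  rw [integral_finset_sum]
  · refine Finset.sum_congr rfl fun k hk => ?_
    rw [integral_const_mul, (bridge μ Z hZ hdens _ (hkt k hk)).2]
    congr 2
    ring
  · intro k hk
    exact ((bridge μ Z hZ hdens _ (hkt k hk)).1).const_mul _
end
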